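/- If u ∈ S_D is not a cube in the ring of integers O of ℚ(√D), then u is not a cube in the field K = ℚ(ω, √D), where ω is a primitive cube root of unity; in particular the extension K(u^{1/3})/K has degree 3. -/

import Mathlib

/-- `A + B√D` is a cube in the ring of integers of `ℚ(√D)`. -/
def IsCubeInO (D A B : ℤ) : Prop :=
  ∃ r s : ℚ, IsIntegral ℤ ((r : ℝ) + (s : ℝ) * Real.sqrt D) ∧
    ((r : ℝ) + (s : ℝ) * Real.sqrt D) ^ 3 = (A : ℝ) + (B : ℝ) * Real.sqrt D

/-- Membership of `u = A + B√D` in the set `𝒮_D`. -/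
def InSD (D A B : ℤ) : Prop :=
  (∃ n : ℤ, A ^ 2 - B ^ 2 * D = n ^ 3) ∧ ¬ IsCubeInO D A B ∧
    ∀ p : ℕ, p.Prime → ¬ (p ^ 3 ∣ Int.gcd A B)

/-- The primitive cube root of unity `ω = (-1 + i√3)/2` in `ℂ`. -/
noncomputable def ωC : ℂ := (-1 + Complex.I * Real.sqrt 3) / 2

open Polynomial IntermediateField Module
set_option maxHeartbeats 1000000
set_option synthInstance.maxHeartbeats 1000000

private lemma omega_eq : ωC ^ 2 + ωC + 1 = 0 := by
  have h3 : ((Real.sqrt 3 : ℝ) : ℂ) ^ 2 = 3 := by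
    rw [← Complex.ofReal_pow, Real.sq_sqrt (by norm_num : (0:ℝ) ≤ 3)]; norm_num
  have hI : Complex.I ^ 2 = -1 := Complex.I_sq
  rw [ωC]; field_simp
  linear_combination Complex.I^2*h3 + 3*hI

/-- If `z ∈ F(ω)` and `z³ = u ∈ F`, then `u` has a cube root in `F`. -/
private lemma cube_root_in_base (F : IntermediateField ℚ ℂ) (uF : F) (z : ℂ)
    (hz3 : z ^ 3 = algebraMap F ℂ uF) (hzω : z ∈ F⟮ωC⟯) :
    ∃ w : F, (algebraMap F ℂ w) ^ 3 = algebraMap F ℂ uF := by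
  have hPmonic : ((X:F[X]) ^ 3 - C uF).Monic := monic_X_pow_sub_C _ (by norm_num)
  have hPeval : Polynomial.aeval z ((X:F[X]) ^ 3 - C uF) = 0 := by
    rw [map_sub, map_pow, aeval_X, aeval_C, hz3, sub_self]
  have hzint : IsIntegral F z := ⟨_, hPmonic, hPeval⟩
  have hmdvd : minpoly F z ∣ (X:F[X]) ^ 3 - C uF := minpoly.dvd F z hPeval
  have hm : (minpoly F z).Monic := minpoly.monic hzint
  obtain ⟨q, hPq⟩ := hmdvd
  have hq : q.Monic := hm.of_mul_monic_left (hPq ▸ hPmonic)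
  have hdegsum : (minpoly F z).natDegree + q.natDegree = 3 := by
    have := hm.natDegree_mul hq
    rw [← hPq, natDegree_X_pow_sub_C] at this
    omega
  have hmpos : 0 < (minpoly F z).natDegree := minpoly.natDegree_pos hzint
  rcases (by omega : (minpoly F z).natDegree = 1 ∨ q.natDegree = 1 ∨
      (minpoly F z).natDegree = 3) with h1 | h1 | h3
  · obtain ⟨c, hc⟩ : ∃ c, minpoly F z = X + C c := ⟨_, hm.eq_X_add_C h1⟩
    refine ⟨-c, ?_⟩
    have haez := minpoly.aeval F z
    rw [hc, map_add, aeval_X, aeval_C] at haez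
    have hzw : z = algebraMap F ℂ (-c) := by
      rw [map_neg]; linear_combination haez
    rw [← hzw, hz3]
  · obtain ⟨c, hc⟩ : ∃ c, q = X + C c := ⟨_, hq.eq_X_add_C h1⟩
    refine ⟨-c, ?_⟩
    have hqw : Polynomial.aeval (algebraMap F ℂ (-c)) q = 0 := by
      rw [hc, map_add, aeval_X, aeval_C, map_neg, neg_add_cancel]
    have hPw : Polynomial.aeval (algebraMap F ℂ (-c)) ((X:F[X]) ^ 3 - C uF) = 0 := by
      rw [hPq, map_mul, hqw, mul_zero]
    rw [map_sub, map_pow, aeval_X, aeval_C, sub_eq_zero] at hPw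
    exact hPw
  · exfalso
    have hωexp : ((X:F[X]) ^ 2 + X + 1) = X ^ 2 + (X + C 1) := by rw [C_1]; ring
    have hωmon : ((X:F[X]) ^ 2 + X + 1).Monic := by
      rw [hωexp]
      refine monic_X_pow_add ?_
      rw [degree_X_add_C]
      decide
    have hωeval : Polynomial.aeval ωC ((X:F[X]) ^ 2 + X + 1) = 0 := by
      rw [map_add, map_add, map_pow, aeval_X, map_one]
      exact omega_eq
    have hωF : IsIntegral F ωC := ⟨_, hωmon, hωeval⟩
    have hle : F⟮z⟯ ≤ F⟮ωC⟯ := adjoin_simple_le_iff.mpr hzω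
    haveI := adjoin.finiteDimensional hωF
    have hr1 : finrank F F⟮z⟯ ≤ finrank F F⟮ωC⟯ :=
      LinearMap.finrank_le_finrank_of_injective (Submodule.inclusion_injective
        (show Subalgebra.toSubmodule F⟮z⟯.toSubalgebra ≤
          Subalgebra.toSubmodule F⟮ωC⟯.toSubalgebra from hle))
    have hr2 : finrank F F⟮ωC⟯ ≤ 2 := by
      rw [adjoin.finrank hωF]
      have h := minpoly.min F ωC hωmon hωeval
      have h2 := natDegree_le_natDegree h
      have h4 : ((X:F[X]) ^ 2 + X + 1).natDegree = 2 := by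
        rw [hωexp]; compute_degree!
      omega
    have hr3 : finrank F F⟮z⟯ = 3 := by rw [adjoin.finrank hzint, h3]
    omega

/-- Every element of `ℚ(d)` with `d` of degree ≤ 2 has the form `r + s·d`. -/
private lemma repr_quadratic {d : ℂ} (hdint : IsIntegral ℚ d)
    (hdeg2 : (minpoly ℚ d).natDegree ≤ 2) (w : ℚ⟮d⟯) :
    ∃ r s : ℚ, algebraMap ℚ⟮d⟯ ℂ w = (r : ℂ) + (s : ℂ) * d := by
  obtain ⟨f, hfdeg, hf⟩ := (adjoin.powerBasis hdint).exists_eq_aeval w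
  rw [adjoin.powerBasis_dim] at hfdeg
  have hf1 : f.natDegree ≤ 1 := by omega
  refine ⟨f.coeff 0, f.coeff 1, ?_⟩
  have h1 : algebraMap ℚ⟮d⟯ ℂ w = Polynomial.aeval d f := by
    rw [hf, ← Polynomial.aeval_algebraMap_apply]
    congr 1
  rw [h1]
  conv_lhs => rw [Polynomial.eq_X_add_C_of_natDegree_le_one hf1]
  simp only [map_add, map_mul, aeval_C, aeval_X, eq_ratCast]
  ring

/-- Abstract main step: if `z ∈ ℚ(ω, d)` and `z³ = A + B d` with `d` quadratic over `ℚ`,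
then `A + B d` is the cube of some `r + s d` with `r, s : ℚ`, and that cube root is
integral over `ℤ` provided `A + B d` is. -/
private lemma main_aux2 (A B : ℤ) (d : ℂ) (e : ℚ) (hd2 : d ^ 2 = algebraMap ℚ ℂ e)
    (z : ℂ) (hzK : z ∈ IntermediateField.adjoin ℚ ({ωC, d} : Set ℂ))
    (hz3 : z ^ 3 = (A : ℂ) + (B : ℂ) * d) :
    ∃ r s : ℚ, ((r : ℂ) + (s : ℂ) * d) ^ 3 = (A : ℂ) + (B : ℂ) * d := by
  have hdF : d ∈ ℚ⟮d⟯ := subset_adjoin _ _ rfl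
  have huF : (A : ℂ) + (B : ℂ) * d ∈ ℚ⟮d⟯ :=
    add_mem (intCast_mem _ A) (mul_mem (intCast_mem _ B) hdF)
  -- z lies in F(ω)
  have hzω : z ∈ (ℚ⟮d⟯)⟮ωC⟯ := by
    have hωmem : ωC ∈ (ℚ⟮d⟯)⟮ωC⟯ := subset_adjoin _ _ rfl
    have hdmem : d ∈ (ℚ⟮d⟯)⟮ωC⟯ := by
      have := IntermediateField.algebraMap_mem (ℚ⟮d⟯)⟮ωC⟯ (⟨d, hdF⟩ : ℚ⟮d⟯)
      rwa [IntermediateField.algebraMap_apply] at this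
    have hsub : (IntermediateField.adjoin ℚ ({ωC, d} : Set ℂ) : Set ℂ) ⊆
        ((ℚ⟮d⟯)⟮ωC⟯ : Set ℂ) := by
      rw [adjoin_subset_adjoin_iff]
      constructor
      · rintro x ⟨q, rfl⟩
        have : algebraMap ℚ ℂ q = ((q : ℂ)) := eq_ratCast _ q
        rw [this]
        exact SubfieldClass.ratCast_mem _ q
      · intro x hx
        rcases hx with rfl | hx
        · exact hωmem
        · rw [Set.mem_singleton_iff] at hx
          subst hx
          exact hdmem
    exact hsub hzK
  have halg : algebraMap (ℚ⟮d⟯) ℂ ⟨_, huF⟩ = (A : ℂ) + (B : ℂ) * d := by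
    rw [IntermediateField.algebraMap_apply]
  obtain ⟨w, hw3⟩ := cube_root_in_base (ℚ⟮d⟯) ⟨_, huF⟩ z (by rw [halg]; exact hz3) hzω
  rw [halg] at hw3
  -- express w as r + s d
  have hdeval : Polynomial.aeval d ((X:ℚ[X]) ^ 2 - C e) = 0 := by
    rw [map_sub, map_pow, aeval_X, aeval_C, hd2, sub_self]
  have hdint : IsIntegral ℚ d := ⟨X ^ 2 - C e, monic_X_pow_sub_C _ two_ne_zero, hdeval⟩
  have hdeg2 : (minpoly ℚ d).natDegree ≤ 2 := by
    have h := minpoly.min ℚ _ (monic_X_pow_sub_C e two_ne_zero) hdeval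
    have := natDegree_le_natDegree h
    rwa [natDegree_X_pow_sub_C] at this
  obtain ⟨r, s, hrs⟩ := repr_quadratic hdint hdeg2 w
  exact ⟨r, s, by rw [← hrs]; exact hw3⟩

private lemma cube_in_O (D A B : ℤ) (hD : 1 < D) (z : ℂ)
    (hzK : z ∈ IntermediateField.adjoin ℚ ({ωC, ((Real.sqrt D : ℝ) : ℂ)} : Set ℂ))
    (hz3 : z ^ 3 = (A : ℂ) + (B : ℂ) * ((Real.sqrt D : ℝ) : ℂ)) : IsCubeInO D A B := by
  have hD0 : (0:ℝ) ≤ (D:ℝ) := by exact_mod_cast (by omega : (0:ℤ) ≤ D)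
  have hd2 : (((Real.sqrt D : ℝ) : ℂ)) ^ 2 = algebraMap ℚ ℂ ((D:ℚ)) := by
    rw [eq_ratCast, ← Complex.ofReal_pow, Real.sq_sqrt hD0]
    push_cast
    ring
  obtain ⟨r, s, hrs⟩ := main_aux2 A B _ (D:ℚ) hd2 z hzK hz3
  have hcubeR : ((r : ℝ) + (s : ℝ) * Real.sqrt D) ^ 3 = (A : ℝ) + (B : ℝ) * Real.sqrt D := by
    apply Complex.ofReal_injective
    push_cast
    exact hrs
  refine ⟨r, s, ?_, hcubeR⟩
  have hdint : IsIntegral ℤ (Real.sqrt D) := by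
    refine ⟨X ^ 2 - C D, Polynomial.monic_X_pow_sub_C _ two_ne_zero, ?_⟩
    have haev : Polynomial.aeval (Real.sqrt D) ((X:ℤ[X]) ^ 2 - C D) = 0 := by
      rw [map_sub, map_pow, Polynomial.aeval_X, Polynomial.aeval_C, Real.sq_sqrt hD0]
      simp
    exact haev
  have hA : IsIntegral ℤ ((A:ℝ)) := by
    simpa using (isIntegral_algebraMap : IsIntegral ℤ (algebraMap ℤ ℝ A))
  have hB : IsIntegral ℤ ((B:ℝ)) := by
    simpa using (isIntegral_algebraMap : IsIntegral ℤ (algebraMap ℤ ℝ B))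
  have hu_int : IsIntegral ℤ ((A:ℝ) + (B:ℝ) * Real.sqrt D) := hA.add (hB.mul hdint)
  exact IsIntegral.of_pow (by norm_num) (hcubeR ▸ hu_int)

private lemma part2_aux (K : IntermediateField ℚ ℂ) (uK : K)
    (hcube : ∀ b : ↥K, b ^ 3 ≠ uK) (x : ℂ) (hx : x ^ 3 = algebraMap K ℂ uK) :
    Module.finrank K (IntermediateField.adjoin K ({x} : Set ℂ)) = 3 := by
  have hirr : Irreducible ((X:(↥K)[X]) ^ 3 - C uK) :=
    X_pow_sub_C_irreducible_of_prime Nat.prime_three hcube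
  have hroot : Polynomial.aeval x ((X:(↥K)[X]) ^ 3 - C uK) = 0 := by
    rw [map_sub, map_pow, aeval_X, aeval_C, hx, sub_self]
  have hmon : ((X:(↥K)[X]) ^ 3 - C uK).Monic := monic_X_pow_sub_C _ (by norm_num)
  have hint : IsIntegral K x := ⟨_, hmon, hroot⟩
  have hmin : minpoly K x = (X:(↥K)[X]) ^ 3 - C uK :=
    (minpoly.eq_of_irreducible_of_monic hirr hroot hmon).symm
  have hfin := adjoin.finrank hint
  rw [hmin, natDegree_X_pow_sub_C] at hfin
  exact hfin


/-- If `u = A + B√D ∈ 𝒮_D` is not a cube in the ring of integers of `ℚ(√D)`, then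
`u` is not a cube in `K = ℚ(ω, √D)`, and the extension `K(u^{1/3})/K` obtained by
adjoining the real cube root of `u` has degree `3`. -/
theorem stmt_17 (D A B : ℤ) (hD : 1 < D) (hsq : Squarefree D) (hu : InSD D A B) :
    letI K : IntermediateField ℚ ℂ :=
      IntermediateField.adjoin ℚ ({ωC, ((Real.sqrt D : ℝ) : ℂ)} : Set ℂ)
    (¬ ∃ z : ℂ, z ∈ K ∧ z ^ 3 = ((A : ℂ) + (B : ℂ) * ((Real.sqrt D : ℝ) : ℂ))) ∧
      ∀ v : ℝ, v ^ 3 = (A : ℝ) + (B : ℝ) * Real.sqrt D →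
        Module.finrank K (IntermediateField.adjoin K ({(v : ℂ)} : Set ℂ)) = 3 := by
  refine ⟨?_, ?_⟩
  · rintro ⟨z, hzK, hz3⟩
    exact hu.2.1 (cube_in_O D A B hD z hzK hz3)
  · intro v hv
    have hdK : ((Real.sqrt D : ℝ) : ℂ) ∈
        IntermediateField.adjoin ℚ ({ωC, ((Real.sqrt D : ℝ) : ℂ)} : Set ℂ) :=
      subset_adjoin _ _ (Set.mem_insert_of_mem _ rfl)
    have huK : (A : ℂ) + (B : ℂ) * ((Real.sqrt D : ℝ) : ℂ) ∈
        IntermediateField.adjoin ℚ ({ωC, ((Real.sqrt D : ℝ) : ℂ)} : Set ℂ) :=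
      add_mem (intCast_mem _ A) (mul_mem (intCast_mem _ B) hdK)
    have hcube : ∀ b : ↥(IntermediateField.adjoin ℚ ({ωC, ((Real.sqrt D : ℝ) : ℂ)} : Set ℂ)),
        b ^ 3 ≠ ⟨_, huK⟩ := by
      intro b hb
      apply hu.2.1
      refine cube_in_O D A B hD (b : ℂ) b.2 ?_
      have hbc : ((b : ℂ)) ^ 3 = ((b ^ 3 :
          ↥(IntermediateField.adjoin ℚ ({ωC, ((Real.sqrt D : ℝ) : ℂ)} : Set ℂ))) : ℂ) := by
        norm_cast
      rw [hbc, hb]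
    have hx : ((v : ℝ) : ℂ) ^ 3 = algebraMap
        (IntermediateField.adjoin ℚ ({ωC, ((Real.sqrt D : ℝ) : ℂ)} : Set ℂ)) ℂ ⟨_, huK⟩ := by
      rw [IntermediateField.algebraMap_apply, ← Complex.ofReal_pow, hv]
      push_cast
      ring
    exact part2_aux _ _ hcube _ hx
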